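/- An infinite stream t over {S,P} rewrites (by the rules SP → ε and PS → ε, via a strongly convergent reduction) to S^ω if and only if the upper S-height sup_n sum(t,n) equals +∞. -/

import Mathlib

/-- Infinite terms over the unary signature {S, P}, identified with streams
over {S,P}; `true` represents `S` and `false` represents `P`. -/
def SPStream : Type := ℕ → Bool

/-- A rewrite step at position `i`: the adjacent pair `S P` or `P S` starting
at position `i` is deleted (rules `P (S x) → x` and `S (P x) → x`). -/
def stepAt (i : ℕ) (t t' : SPStream) : Prop :=
  t i ≠ t (i + 1) ∧ ∀ n, t' n = if n < i then t n else t (n + 2)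

/-- A rewrite step (at any position). -/
def stepSP (t t' : SPStream) : Prop := ∃ i, stepAt i t t'

/-- A rewrite step at depth at least `d`. -/
def stepGe (d : ℕ) (t t' : SPStream) : Prop := ∃ i, d ≤ i ∧ stepAt i t t'

/-- `sconvTo t s`: there is a strongly convergent reduction of length `≤ ω`
from `t` to `s`: a sequence of stages `g n`, starting at `t`, where from stage
`n` on all contracted redexes are at depth `≥ n` (so depths tend to infinity),
and stage `n` already agrees with the limit `s` below depth `n`. -/
def sconvTo (t s : SPStream) : Prop :=
  ∃ g : ℕ → SPStream, g 0 = t ∧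
    (∀ n, Relation.ReflTransGen (stepGe n) (g n) (g (n + 1))) ∧
    (∀ n k, k < n → g n k = s k)

/-- `S^ω`, the stream of all `S`'s. -/
def Somega : SPStream := fun _ => true

/-- `P^ω`, the stream of all `P`'s. -/
def Pomega : SPStream := fun _ => false

/-- `psum t n`: number of `S`'s minus number of `P`'s among the
first `n` letters of `t`. -/
def psum (t : SPStream) : ℕ → ℤ
  | 0 => 0
  | n + 1 => psum t n + (if t n then 1 else -1)

def Unb (u : SPStream) : Prop := ∀ m : ℤ, ∃ n : ℕ, m < psum u n

lemma psum_succ (t : SPStream) (n : ℕ) :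
    psum t (n+1) = psum t n + (if t n then 1 else -1) := rfl

lemma psum_le (t : SPStream) : ∀ n : ℕ, psum t n ≤ (n : ℤ)
  | 0 => le_refl 0
  | n+1 => by
    have := psum_le t n
    rw [psum_succ]
    split <;> push_cast <;> omega

lemma psum_cancel {t : SPStream} {i : ℕ} (h : t i ≠ t (i+1)) :
    psum t (i+2) = psum t i := by
  have e : psum t (i+2) = psum t i + (if t i then (1:ℤ) else -1)
      + (if t (i+1) then 1 else -1) := rfl
  rw [e]
  cases hi : t i <;> cases hj : t (i+1) <;> simp [hi, hj] at h ⊢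

lemma psum_stepAt {i : ℕ} {t t' : SPStream} (h : stepAt i t t') :
    (∀ n, n ≤ i → psum t' n = psum t n) ∧
    (∀ n, i ≤ n → psum t' n = psum t (n+2)) := by
  obtain ⟨hne, he⟩ := h
  have A : ∀ n, n ≤ i → psum t' n = psum t n := by
    intro n hn
    induction n with
    | zero => rfl
    | succ m ih =>
      have hm : t' m = t m := by rw [he m]; simp [Nat.lt_of_succ_le hn]
      rw [psum_succ, psum_succ, ih (Nat.le_of_succ_le hn), hm]
  refine ⟨A, ?_⟩
  intro n hn
  induction n, hn using Nat.le_induction with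
  | base => rw [A i le_rfl, psum_cancel hne]
  | succ n hn ih =>
    have hm : t' n = t (n+2) := by rw [he n]; simp [Nat.not_lt.mpr hn]
    rw [psum_succ, ih, hm]; rfl

lemma unb_step {t t' : SPStream} (h : stepSP t t') (hu : Unb t) : Unb t' := by
  obtain ⟨i, hi⟩ := h
  obtain ⟨A, B⟩ := psum_stepAt hi
  intro m
  obtain ⟨n, hn⟩ := hu (max m (psum t (i+1)))
  have h1 : m < psum t n := lt_of_le_of_lt (le_max_left _ _) hn
  have h2 : psum t (i+1) < psum t n := lt_of_le_of_lt (le_max_right _ _) hn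
  have hne : n ≠ i+1 := fun hh => by rw [hh] at h2; exact lt_irrefl _ h2
  rcases le_or_gt n i with hni | hni
  · exact ⟨n, by rw [A n hni]; exact h1⟩
  · refine ⟨n - 2, ?_⟩
    rw [B _ (by omega), show n - 2 + 2 = n by omega]
    exact h1

lemma range_step {t t' : SPStream} (h : stepSP t t') :
    ∀ n, ∃ k, psum t' n = psum t k := by
  obtain ⟨i, hi⟩ := h
  obtain ⟨A, B⟩ := psum_stepAt hi
  intro n
  rcases le_or_gt n i with h' | h'
  · exact ⟨n, A n h'⟩
  · exact ⟨n+2, B n h'.le⟩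

lemma range_rtg {t t' : SPStream} (h : Relation.ReflTransGen stepSP t t') :
    ∀ n, ∃ k, psum t' n = psum t k := by
  induction h with
  | refl => exact fun n => ⟨n, rfl⟩
  | tail _ hbc ih =>
    intro n
    obtain ⟨k, hk⟩ := range_step hbc n
    obtain ⟨k', hk'⟩ := ih k
    exact ⟨k', hk.trans hk'⟩

lemma unb_rtg {t t' : SPStream} (h : Relation.ReflTransGen stepSP t t') (hu : Unb t) :
    Unb t' := by
  induction h with
  | refl => exact hu
  | tail _ hbc ih => exact unb_step hbc ih

lemma stepGe_sub {d : ℕ} {t t' : SPStream} (h : stepGe d t t') : stepSP t t' := by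
  obtain ⟨i, _, h⟩ := h; exact ⟨i, h⟩

lemma prefix_rtg {d : ℕ} {t t' : SPStream}
    (h : Relation.ReflTransGen (stepGe d) t t') : ∀ k, k < d → t' k = t k := by
  induction h with
  | refl => exact fun _ _ => rfl
  | tail _ hbc ih =>
    obtain ⟨i, hdi, _, he⟩ := hbc
    intro k hk
    rw [he k, if_pos (lt_of_lt_of_le hk hdi)]
    exact ih k hk

lemma auxd : ∀ N d : ℕ, ∀ u : SPStream, Unb u → psum u d < psum u (d + N) →
    ∃ u', Relation.ReflTransGen (stepGe d) u u' ∧ u' d = true ∧ Unb u' := by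
  intro N
  induction N using Nat.strong_induction_on with
  | _ N ih =>
  intro d u hu hlt
  by_cases hd : u d = true
  · exact ⟨u, .refl, hd, hu⟩
  · have hdN : N ≠ 0 := by rintro rfl; simp at hlt
    by_cases hre : ∃ i, d ≤ i ∧ i + 2 ≤ d + N ∧ u i ≠ u (i+1)
    · obtain ⟨i, hdi, hiN, hne⟩ := hre
      set u' : SPStream := fun n => if n < i then u n else u (n+2) with hu'
      have hst : stepAt i u u' := ⟨hne, fun n => rfl⟩
      obtain ⟨A, B⟩ := psum_stepAt hst
      have hUnb' : Unb u' := unb_step ⟨i, hst⟩ hu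
      have hlt' : psum u' d < psum u' (d + (N - 2)) := by
        rw [A d hdi, B _ (by omega), show d + (N-2) + 2 = d + N by omega]
        exact hlt
      obtain ⟨u'', h1, h2, h3⟩ := ih (N-2) (by omega) d u' hUnb' hlt'
      exact ⟨u'', .head ⟨i, hdi, hst⟩ h1, h2, h3⟩
    · exfalso
      push_neg at hre
      have hd' : u d = false := by simpa using hd
      have hall : ∀ k, k < N → u (d + k) = false := by
        intro k hk
        induction k with
        | zero => simpa using hd'
        | succ m ihm =>
          have := hre (d + m) (by omega) (by omega)
          rw [show d + (m+1) = (d + m) + 1 by omega, ← this]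
          exact ihm (by omega)
      have hsum : ∀ k, k ≤ N → psum u (d + k) = psum u d - k := by
        intro k hk
        induction k with
        | zero => simp
        | succ m ihm =>
          rw [show d + (m+1) = (d+m)+1 by omega, psum_succ,
            ihm (by omega), hall m (by omega)]
          push_cast; ring
      have := hsum N le_rfl
      omega

lemma next (n : ℕ) (u : SPStream) (hu : Unb u) (hpre : ∀ k, k < n → u k = true) :
    ∃ u', Relation.ReflTransGen (stepGe n) u u' ∧
      (∀ k, k < n + 1 → u' k = true) ∧ Unb u' := by
  have hsum : ∀ k, k ≤ n → psum u k = k := by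
    intro k hk
    induction k with
    | zero => rfl
    | succ m ihm =>
      rw [psum_succ, ihm (by omega), hpre m (by omega)]
      norm_num
  obtain ⟨m, hm⟩ := hu (psum u n)
  have hmn : n < m := by
    by_contra hcon
    push_neg at hcon
    have h1 := psum_le u m
    have h2 := hsum n le_rfl
    have h3 : (m : ℤ) ≤ (n : ℤ) := by exact_mod_cast hcon
    omega
  obtain ⟨u', h1, h2, h3⟩ := auxd (m - n) n u hu
    (by rw [show n + (m - n) = m by omega]; exact hm)
  refine ⟨u', h1, ?_, h3⟩
  intro k hk
  rcases Nat.lt_or_ge k n with hkn | hkn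
  · rw [prefix_rtg h1 k hkn]; exact hpre k hkn
  · have : k = n := by omega
    rw [this]; exact h2

lemma psum_prefix_true (u : SPStream) (n : ℕ) (h : ∀ k, k < n → u k = true) :
    psum u n = n := by
  induction n with
  | zero => rfl
  | succ m ihm =>
    rw [psum_succ, ihm (fun k hk => h k (by omega)), h m (by omega)]
    norm_num

open Classical in
noncomputable def nextF (n : ℕ) (u : SPStream) : SPStream :=
  if h : Unb u ∧ ∀ k, k < n → u k = true then (next n u h.1 h.2).choose else u

noncomputable def chain (t : SPStream) : ℕ → SPStream
  | 0 => t
  | n + 1 => nextF n (chain t n)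

/-- a stream rewrites by a strongly convergent reduction to `S^ω`
iff its upper S-height `sup_n sum(t,n)` is `+∞` (i.e. the partial sums are
unbounded above). -/
theorem statement2 (t : SPStream) :
    sconvTo t Somega ↔ ∀ m : ℤ, ∃ n : ℕ, m < psum t n := by
  constructor
  · rintro ⟨g, hg0, hsteps, hlim⟩ m
    have key : ∀ j n, ∃ k, psum (g j) n = psum t k := by
      intro j
      induction j with
      | zero => rw [hg0]; exact fun n => ⟨n, rfl⟩
      | succ j ih =>
        intro n
        have h := Relation.ReflTransGen.mono (fun a b hab => stepGe_sub hab) _ _ (hsteps j)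
        obtain ⟨k, hk⟩ := range_rtg h n
        obtain ⟨k', hk'⟩ := ih k
        exact ⟨k', hk.trans hk'⟩
    set j := m.toNat + 1 with hj
    have hpre : ∀ k, k < j → g j k = true := fun k hk => hlim j k hk
    have hsum : psum (g j) j = j := psum_prefix_true _ _ hpre
    obtain ⟨k, hk⟩ := key j j
    refine ⟨k, ?_⟩
    rw [← hk, hsum]
    have : m ≤ (m.toNat : ℤ) := Int.self_le_toNat m
    push_cast [hj]
    omega
  · intro hu
    have hInv : ∀ n, Unb (chain t n) ∧ ∀ k, k < n → chain t n k = true := by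
      intro n
      induction n with
      | zero => exact ⟨hu, fun k hk => absurd hk (by omega)⟩
      | succ n ihn =>
        have hch : chain t (n+1) = (next n (chain t n) ihn.1 ihn.2).choose := by
          rw [chain, nextF, dif_pos ⟨ihn.1, ihn.2⟩]
        have hspec := (next n (chain t n) ihn.1 ihn.2).choose_spec
        rw [hch]
        exact ⟨hspec.2.2, hspec.2.1⟩
    refine ⟨chain t, rfl, ?_, ?_⟩
    · intro n
      have h := hInv n
      have hch : chain t (n+1) = (next n (chain t n) h.1 h.2).choose := by
        rw [chain, nextF, dif_pos ⟨h.1, h.2⟩]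
      rw [hch]
      exact (next n (chain t n) h.1 h.2).choose_spec.1
    · intro n k hk
      exact (hInv n).2 k hk
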